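/- Let Γ ⊂ ℝⁿ be an open convex cone with vertex at the origin containing the positive orthant. If A and B are real symmetric n×n matrices such that the eigenvalue vector of A lies in the translated set δ·(1,…,1) + Γ for some δ > 0, and B ≥ −δ·I as quadratic forms, then the eigenvalue vector of A + B lies in Γ. -/

import Mathlib

open Matrix Finset

namespace EigAux

variable {n : ℕ}

lemma star_eq_trans (V : Matrix (Fin n) (Fin n) ℝ) : star V = Vᵀ := by
  ext i j; simp [Matrix.star_apply]

lemma vecMul_eq (V : Matrix (Fin n) (Fin n) ℝ) (x : Fin n → ℝ) :
    x ᵥ* V = Vᵀ *ᵥ x := by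
  rw [← Matrix.transpose_transpose V, Matrix.vecMul_transpose, Matrix.transpose_transpose]

lemma quad_eq (V : Matrix (Fin n) (Fin n) ℝ) (μ x : Fin n → ℝ) :
    x ⬝ᵥ (V * Matrix.diagonal μ * Vᵀ) *ᵥ x = ∑ j, μ j * ((Vᵀ *ᵥ x) j) ^ 2 := by
  rw [← Matrix.mulVec_mulVec, ← Matrix.mulVec_mulVec, Matrix.dotProduct_mulVec, vecMul_eq]
  simp only [dotProduct, Matrix.mulVec_diagonal]
  exact Finset.sum_congr rfl fun j _ => by ring

lemma norm_eq (V : Matrix (Fin n) (Fin n) ℝ) (hV2 : V * Vᵀ = 1) (x : Fin n → ℝ) :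
    x ⬝ᵥ x = ∑ j, ((Vᵀ *ᵥ x) j) ^ 2 := by
  have hx : V *ᵥ (Vᵀ *ᵥ x) = x := by
    rw [Matrix.mulVec_mulVec, hV2, Matrix.one_mulVec]
  have h2 : x ⬝ᵥ (V *ᵥ (Vᵀ *ᵥ x)) = x ⬝ᵥ x := by rw [hx]
  rw [← h2, Matrix.dotProduct_mulVec, vecMul_eq]
  simp only [dotProduct]
  exact Finset.sum_congr rfl fun j _ => by ring

lemma supp (V : Matrix (Fin n) (Fin n) ℝ) (hV1 : Vᵀ * V = 1) {ι : Type} (p : ι → Fin n)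
    (x : Fin n → ℝ)
    (hx : x ∈ Submodule.span ℝ (Set.range fun i : ι => V *ᵥ Pi.single (p i) 1))
    (j : Fin n) (hj : ∀ i, p i ≠ j) : (Vᵀ *ᵥ x) j = 0 := by
  induction hx using Submodule.span_induction with
  | mem y hy =>
    obtain ⟨i, rfl⟩ := hy
    rw [Matrix.mulVec_mulVec, hV1, Matrix.one_mulVec]
    exact Pi.single_eq_of_ne (Ne.symm (hj i)) 1
  | zero => simp
  | add y z hy hz h1 h2 => rw [Matrix.mulVec_add, Pi.add_apply, h1, h2, add_zero]
  | smul a y hy h1 => rw [Matrix.mulVec_smul, Pi.smul_apply, h1, smul_zero]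

lemma rayleigh_le (V : Matrix (Fin n) (Fin n) ℝ) (hV1 : Vᵀ * V = 1) (hV2 : V * Vᵀ = 1)
    (μ : Fin n → ℝ) {ι : Type} (p : ι → Fin n) (c : ℝ) (hc : ∀ i, μ (p i) ≤ c)
    (x : Fin n → ℝ)
    (hx : x ∈ Submodule.span ℝ (Set.range fun i : ι => V *ᵥ Pi.single (p i) 1)) :
    x ⬝ᵥ (V * Matrix.diagonal μ * Vᵀ) *ᵥ x ≤ c * (x ⬝ᵥ x) := by
  rw [quad_eq, norm_eq V hV2, Finset.mul_sum]
  refine Finset.sum_le_sum fun j _ => ?_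
  by_cases h : ∃ i, p i = j
  · obtain ⟨i, rfl⟩ := h
    exact mul_le_mul_of_nonneg_right (hc i) (sq_nonneg _)
  · push_neg at h
    rw [supp V hV1 p x hx j h]
    simp

lemma rayleigh_ge (V : Matrix (Fin n) (Fin n) ℝ) (hV1 : Vᵀ * V = 1) (hV2 : V * Vᵀ = 1)
    (μ : Fin n → ℝ) {ι : Type} (p : ι → Fin n) (c : ℝ) (hc : ∀ i, c ≤ μ (p i))
    (x : Fin n → ℝ)
    (hx : x ∈ Submodule.span ℝ (Set.range fun i : ι => V *ᵥ Pi.single (p i) 1)) :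
    c * (x ⬝ᵥ x) ≤ x ⬝ᵥ (V * Matrix.diagonal μ * Vᵀ) *ᵥ x := by
  rw [quad_eq, norm_eq V hV2, Finset.mul_sum]
  refine Finset.sum_le_sum fun j _ => ?_
  by_cases h : ∃ i, p i = j
  · obtain ⟨i, rfl⟩ := h
    exact mul_le_mul_of_nonneg_right (hc i) (sq_nonneg _)
  · push_neg at h
    rw [supp V hV1 p x hx j h]
    simp

lemma licols (V : Matrix (Fin n) (Fin n) ℝ) (hV1 : Vᵀ * V = 1) :
    LinearIndependent ℝ (fun j : Fin n => V *ᵥ Pi.single j 1) := by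
  have hinj : Function.Injective V.mulVecLin := by
    intro u v huv
    have h1 : Vᵀ *ᵥ (V *ᵥ u) = Vᵀ *ᵥ (V *ᵥ v) := by
      simpa using congrArg (fun w => Vᵀ *ᵥ w) huv
    rwa [Matrix.mulVec_mulVec, Matrix.mulVec_mulVec, hV1, Matrix.one_mulVec,
      Matrix.one_mulVec] at h1
  have hb : LinearIndependent ℝ (fun j : Fin n => (Pi.single j 1 : Fin n → ℝ)) := by
    have h := (Pi.basisFun ℝ (Fin n)).linearIndependent
    have heq : (fun j : Fin n => (Pi.single j 1 : Fin n → ℝ)) = ⇑(Pi.basisFun ℝ (Fin n)) := by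
      funext j; simp
    rw [heq]; exact h
  have heq2 : (fun j : Fin n => V *ᵥ Pi.single j 1) =
      ⇑V.mulVecLin ∘ (fun j : Fin n => (Pi.single j 1 : Fin n → ℝ)) := by
    funext j; rfl
  rw [heq2]
  exact hb.map' V.mulVecLin (LinearMap.ker_eq_bot.mpr hinj)

/-- Weyl-type comparison of sorted eigenvalues. -/
lemma weyl (A B : Matrix (Fin n) (Fin n) ℝ) (hA : A.IsHermitian) (hB : B.IsHermitian)
    (δ : ℝ) (hBge : (B + δ • (1 : Matrix (Fin n) (Fin n) ℝ)).PosSemidef) (k : Fin n) :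
    hA.eigenvalues (Tuple.sort hA.eigenvalues k) - δ ≤
      (hA.add hB).eigenvalues (Tuple.sort (hA.add hB).eigenvalues k) := by
  set hC := hA.add hB with hhC
  set a := hA.eigenvalues with ha
  set c := hC.eigenvalues with hc
  set σ := Tuple.sort a with hσ
  set τ := Tuple.sort c with hτ
  set U : Matrix (Fin n) (Fin n) ℝ := ↑hA.eigenvectorUnitary with hU
  set W : Matrix (Fin n) (Fin n) ℝ := ↑hC.eigenvectorUnitary with hW
  have hU1 : Uᵀ * U = 1 := by
    rw [← star_eq_trans]
    exact Matrix.mem_unitaryGroup_iff'.mp hA.eigenvectorUnitary.2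
  have hU2 : U * Uᵀ = 1 := by
    rw [← star_eq_trans]
    exact Matrix.mem_unitaryGroup_iff.mp hA.eigenvectorUnitary.2
  have hW1 : Wᵀ * W = 1 := by
    rw [← star_eq_trans]
    exact Matrix.mem_unitaryGroup_iff'.mp hC.eigenvectorUnitary.2
  have hW2 : W * Wᵀ = 1 := by
    rw [← star_eq_trans]
    exact Matrix.mem_unitaryGroup_iff.mp hC.eigenvectorUnitary.2
  have hof : ∀ b : Fin n → ℝ, RCLike.ofReal ∘ b = b := by
    intro b; funext i; simp [RCLike.ofReal_real_eq_id]
  have hAeq : A = U * Matrix.diagonal a * Uᵀ := by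
    rw [← star_eq_trans]
    have h := hA.spectral_theorem
    rw [hof] at h
    exact h
  have hCeq : A + B = W * Matrix.diagonal c * Wᵀ := by
    rw [← star_eq_trans]
    have h := hC.spectral_theorem
    rw [hof] at h
    exact h
  -- subspaces
  set V1 : Submodule ℝ (Fin n → ℝ) :=
    Submodule.span ℝ (Set.range fun i : Set.Iic k => W *ᵥ Pi.single (τ i) 1) with hV1def
  set V2 : Submodule ℝ (Fin n → ℝ) :=
    Submodule.span ℝ (Set.range fun i : Set.Ici k => U *ᵥ Pi.single (σ i) 1) with hV2def
  have hli1 : LinearIndependent ℝ (fun i : Set.Iic k => W *ᵥ Pi.single (τ i) 1) := by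
    refine (licols W hW1).comp (fun i : Set.Iic k => τ i) ?_
    exact τ.injective.comp Subtype.val_injective
  have hli2 : LinearIndependent ℝ (fun i : Set.Ici k => U *ᵥ Pi.single (σ i) 1) := by
    refine (licols U hU1).comp (fun i : Set.Ici k => σ i) ?_
    exact σ.injective.comp Subtype.val_injective
  have hr1 : Module.finrank ℝ V1 = (k : ℕ) + 1 := by
    rw [hV1def, finrank_span_eq_card hli1]; simp
  have hr2 : Module.finrank ℝ V2 = n - (k : ℕ) := by
    rw [hV2def, finrank_span_eq_card hli2]; simp
  have hsum := Submodule.finrank_sup_add_finrank_inf_eq V1 V2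
  have htop : Module.finrank ℝ ↥(V1 ⊔ V2) ≤ n := by
    have := Submodule.finrank_le (V1 ⊔ V2)
    simpa [Module.finrank_pi] using this
  have hposr : 0 < Module.finrank ℝ ↥(V1 ⊓ V2) := by
    have hk := k.isLt
    omega
  obtain ⟨x, hxne⟩ := Module.finrank_pos_iff_exists_ne_zero.mp hposr
  have hx1 : (x : Fin n → ℝ) ∈ V1 := x.2.1
  have hx2 : (x : Fin n → ℝ) ∈ V2 := x.2.2
  have hxne' : (x : Fin n → ℝ) ≠ 0 := by
    simpa [Submodule.coe_eq_zero] using hxne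
  set y : Fin n → ℝ := ↑x with hy
  have hs : 0 < y ⬝ᵥ y := by
    have hnn : 0 ≤ y ⬝ᵥ y := Finset.sum_nonneg fun i _ => mul_self_nonneg _
    rcases lt_or_eq_of_le hnn with h | h
    · exact h
    · exact absurd (dotProduct_self_eq_zero.mp h.symm) hxne'
  have hup : y ⬝ᵥ (A + B) *ᵥ y ≤ c (τ k) * (y ⬝ᵥ y) := by
    rw [hCeq]
    refine rayleigh_le W hW1 hW2 c (fun i : Set.Iic k => τ i) (c (τ k)) ?_ y hx1
    intro i
    exact Tuple.monotone_sort c i.2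
  have hlo : a (σ k) * (y ⬝ᵥ y) ≤ y ⬝ᵥ A *ᵥ y := by
    rw [hAeq]
    refine rayleigh_ge U hU1 hU2 a (fun i : Set.Ici k => σ i) (a (σ k)) ?_ y hx2
    intro i
    exact Tuple.monotone_sort a i.2
  have hBb : -δ * (y ⬝ᵥ y) ≤ y ⬝ᵥ B *ᵥ y := by
    have h0 := hBge.dotProduct_mulVec_nonneg y
    have hstar : star y = y := by simp
    rw [hstar, Matrix.add_mulVec, dotProduct_add, Matrix.smul_mulVec,
      Matrix.one_mulVec, dotProduct_smul] at h0
    have : δ • (y ⬝ᵥ y) = δ * (y ⬝ᵥ y) := rfl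
    nlinarith [h0]
  have hsplit : y ⬝ᵥ (A + B) *ᵥ y = y ⬝ᵥ A *ᵥ y + y ⬝ᵥ B *ᵥ y := by
    rw [Matrix.add_mulVec, dotProduct_add]
  have hfin : (a (σ k) - δ) * (y ⬝ᵥ y) ≤ c (τ k) * (y ⬝ᵥ y) := by nlinarith
  exact (mul_le_mul_iff_of_pos_right hs).mp hfin

end EigAux

/-- If `Γ ⊂ ℝⁿ` is an open convex cone (symmetric under coordinate permutations)
containing the positive orthant, `A`, `B` are symmetric matrices with
`λ(A) ∈ δ·(1,…,1) + Γ` and `B ≥ −δ·I`, then `λ(A + B) ∈ Γ`. -/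
theorem eigenvalues_add_mem_cone
    (n : ℕ) (Γ : Set (Fin n → ℝ))
    (hopen : IsOpen Γ)
    (hsym : ∀ (σ : Equiv.Perm (Fin n)) (x : Fin n → ℝ), x ∈ Γ → (x ∘ σ) ∈ Γ)
    (hconv : Convex ℝ Γ)
    (hcone : ∀ (t : ℝ), 0 < t → ∀ x ∈ Γ, t • x ∈ Γ)
    (horthant : ∀ x : Fin n → ℝ, (∀ i, 0 < x i) → x ∈ Γ)
    (A B : Matrix (Fin n) (Fin n) ℝ)
    (hA : A.IsHermitian) (hB : B.IsHermitian)
    (δ : ℝ) (hδ : 0 < δ)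
    (hAin : (fun i => hA.eigenvalues i - δ) ∈ Γ)
    (hBge : (B + δ • (1 : Matrix (Fin n) (Fin n) ℝ)).PosSemidef) :
    (fun i => (hA.add hB).eigenvalues i) ∈ Γ := by
  -- monotonicity of Γ
  have hmono : ∀ x ∈ Γ, ∀ y : Fin n → ℝ, (∀ i, x i ≤ y i) → y ∈ Γ := by
    intro x hx y hxy
    obtain ⟨ε, hε, hball⟩ := Metric.isOpen_iff.mp hopen x hx
    set x' : Fin n → ℝ := fun i => x i - ε / 2 with hx'def
    have hx' : x' ∈ Γ := by
      refine hball ?_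
      rw [Metric.mem_ball]
      rw [dist_pi_lt_iff hε]
      intro i
      have : dist (x' i) (x i) = ε / 2 := by
        rw [Real.dist_eq]
        simp [hx'def, abs_of_nonneg (le_of_lt (half_pos hε))]
      rw [this]; linarith
    set z : Fin n → ℝ := fun i => y i - x' i with hzdef
    have hz : z ∈ Γ := by
      refine horthant z fun i => ?_
      have := hxy i
      simp only [hzdef, hx'def]
      linarith
    have hmid : (1/2 : ℝ) • x' + (1/2 : ℝ) • z ∈ Γ :=
      hconv hx' hz (by norm_num) (by norm_num) (by norm_num)
    have h2 : (2 : ℝ) • ((1/2 : ℝ) • x' + (1/2 : ℝ) • z) ∈ Γ :=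
      hcone 2 (by norm_num) _ hmid
    have hyeq : y = (2 : ℝ) • ((1/2 : ℝ) • x' + (1/2 : ℝ) • z) := by
      funext i
      simp only [Pi.smul_apply, Pi.add_apply, smul_eq_mul, hzdef]
      ring
    rwa [hyeq]
  set a := hA.eigenvalues with ha
  set c := (hA.add hB).eigenvalues with hc
  set σ := Tuple.sort a with hσ
  set τ := Tuple.sort c with hτ
  have h1 : ((fun i => a i - δ) ∘ σ) ∈ Γ := hsym σ _ hAin
  have h3 : (c ∘ τ) ∈ Γ := by
    refine hmono _ h1 _ fun i => ?_
    exact EigAux.weyl A B hA hB δ hBge i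
  have h4 := hsym τ⁻¹ _ h3
  have : (c ∘ τ) ∘ (τ⁻¹ : Equiv.Perm (Fin n)) = fun i => c i := by
    funext i
    simp [Function.comp]
  rwa [this] at h4
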